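/- If A is a set of n positive integers with |AA| ≤ 3n - 4, then A is an additive Sidon set, i.e., |A+A| = n(n+1)/2. -/

import Mathlib

open Finset Pointwise

noncomputable section
abbrev V := Polynomial ℚ

/-- A finset lies on an affine line. -/
def Coll (s : Finset V) : Prop := ∃ p d : V, ∀ x ∈ s, ∃ t : ℚ, x = p + t • d

lemma coll_of_card_le_two {s : Finset V} (hs : s.card ≤ 2) : Coll s := by
  interval_cases h : s.card
  · refine ⟨0, 0, fun x hx => absurd hx ?_⟩
    simp [Finset.card_eq_zero.mp h]
  · obtain ⟨a, rfl⟩ := Finset.card_eq_one.mp h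
    exact ⟨a, 0, by intro x hx; exact ⟨0, by simpa using (Finset.mem_singleton.mp hx)⟩⟩
  · obtain ⟨a, b, hab, rfl⟩ := Finset.card_eq_two.mp h
    refine ⟨a, b - a, fun x hx => ?_⟩
    rcases Finset.mem_insert.mp hx with rfl | hx
    · exact ⟨0, by simp⟩
    · exact ⟨1, by simp [Finset.mem_singleton.mp hx]⟩

/-- three points on a common line lie on the line through two of them -/
lemma three_on_line {p d x y z : V} {a b c : ℚ} (hx : x = p + a • d) (hy : y = p + b • d)
    (hz : z = p + c • d) (hxy : x ≠ y) : ∃ t : ℚ, z = x + t • (y - x) := by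
  have hab : b - a ≠ 0 := by
    intro hc
    apply hxy
    have : a = b := by linarith [sub_eq_zero.mp hc]
    rw [hx, hy, this]
  refine ⟨(c - a) / (b - a), ?_⟩
  rw [hx, hy, hz]
  have h1 : (p + b • d) - (p + a • d) = (b - a) • d := by
    rw [sub_smul]; abel
  rw [h1, smul_smul, div_mul_cancel₀ _ hab, sub_smul]
  abel

lemma coll_neg {s : Finset V} (h : Coll s) : Coll (-s) := by
  obtain ⟨p, d, hp⟩ := h
  refine ⟨-p, -d, fun x hx => ?_⟩
  rw [Finset.mem_neg] at hx
  obtain ⟨y, hy, rfl⟩ := hx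
  obtain ⟨t, ht⟩ := hp y hy
  exact ⟨t, by rw [ht]; simp; abel⟩

lemma not_coll_erase {B : Finset V} {v w : V} (hv : v ∈ B) (hw : w ∈ B) (hvw : v ≠ w)
    (hcard : 4 ≤ B.card) (hnc : ¬ Coll B) :
    ¬ Coll (B.erase v) ∨ ¬ Coll (B.erase w) := by
  by_contra hc
  push_neg at hc
  obtain ⟨⟨p₁, d₁, h₁⟩, ⟨p₂, d₂, h₂⟩⟩ := hc
  -- two distinct points in B \ {v, w}
  have hcard2 : 2 ≤ ((B.erase v).erase w).card := by
    have h1 : (B.erase v).card = B.card - 1 := Finset.card_erase_of_mem hv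
    have h2 : ((B.erase v).erase w).card = (B.erase v).card - 1 :=
      Finset.card_erase_of_mem (Finset.mem_erase.mpr ⟨hvw.symm, hw⟩)
    omega
  obtain ⟨x, hx, y, hy, hxy⟩ := Finset.one_lt_card.mp hcard2
  have hxev : x ∈ B.erase v := Finset.mem_of_mem_erase hx
  have hyev : y ∈ B.erase v := Finset.mem_of_mem_erase hy
  obtain ⟨hxw, hx'⟩ := Finset.mem_erase.mp hx
  obtain ⟨hxv, hxB⟩ := Finset.mem_erase.mp hx'
  obtain ⟨hyw, hy'⟩ := Finset.mem_erase.mp hy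
  obtain ⟨hyv, hyB⟩ := Finset.mem_erase.mp hy'
  -- x, y are on both lines
  obtain ⟨ax, hax⟩ := h₁ x hx'
  obtain ⟨ay, hay⟩ := h₁ y hy'
  obtain ⟨bx, hbx⟩ := h₂ x (Finset.mem_erase.mpr ⟨hxw, hxB⟩)
  obtain ⟨by', hby⟩ := h₂ y (Finset.mem_erase.mpr ⟨hyw, hyB⟩)
  apply hnc
  refine ⟨x, y - x, fun z hz => ?_⟩
  by_cases hzv : z = v
  · obtain ⟨bz, hbz⟩ := h₂ z (Finset.mem_erase.mpr ⟨hzv ▸ hvw, hz⟩)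
    exact three_on_line hbx hby hbz hxy
  · obtain ⟨az, haz⟩ := h₁ z (Finset.mem_erase.mpr ⟨hzv, hz⟩)
    exact three_on_line hax hay haz hxy

section step
variable {B : Finset V} {f : V → ℚ}

lemma f_neg (hf : ∀ x y, f (x + y) = f x + f y) : ∀ x, f (-x) = - f x := by
  have h0 : f 0 = 0 := by have := hf 0 0; simpa using this.symm
  intro x
  have := hf x (-x)
  simp [h0] at this
  linarith

lemma f_injOn_of_injOn_add (hf : ∀ x y, f (x + y) = f x + f y)
    (hinj : Set.InjOn f ↑(B + B)) : Set.InjOn f ↑B := by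
  intro x hx y hy hxy
  have hx' : x + x ∈ B + B := Finset.add_mem_add (by simpa using hx) (by simpa using hx)
  have hy' : x + y ∈ B + B := Finset.add_mem_add (by simpa using hx) (by simpa using hy)
  have : x + x = x + y := hinj (Finset.mem_coe.mpr hx') (Finset.mem_coe.mpr hy')
    (by rw [hf, hf, hxy])
  exact add_left_cancel this

lemma step (hf : ∀ x y, f (x + y) = f x + f y) (hinj : Set.InjOn f ↑(B + B))
    {v : V} (hv : v ∈ B) (hmax : ∀ x ∈ B, x ≠ v → f x < f v)
    (hnc : ¬ Coll B) (h3 : 3 ≤ B.card) :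
    (B.erase v + B.erase v).card + 3 ≤ (B + B).card := by
  set B' := B.erase v with hB'
  have hBinj : Set.InjOn f ↑B := f_injOn_of_injOn_add hf hinj
  have hB'ne : B'.Nonempty := by
    rw [← Finset.card_pos, Finset.card_erase_of_mem hv]; omega
  obtain ⟨a₁, ha₁, ha₁max⟩ := Finset.exists_max_image B' f hB'ne
  have ha₁B : a₁ ∈ B := Finset.mem_of_mem_erase ha₁
  have ha₁v : a₁ ≠ v := (Finset.mem_erase.mp ha₁).1
  have hfa₁v : f a₁ < f v := hmax a₁ ha₁B ha₁v
  have hB'sub : ∀ x ∈ B', x ∈ B := fun x hx => Finset.mem_of_mem_erase hx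
  have hfB' : ∀ x ∈ B', f x ≤ f a₁ := ha₁max
  -- the two guaranteed new sums
  have hnm2v : v + v ∉ B' + B' := by
    intro hmem
    obtain ⟨y, hy, z, hz, hyz⟩ := Finset.mem_add.mp hmem
    have h1 : f y < f v := hmax y (hB'sub y hy) (Finset.mem_erase.mp hy).1
    have h2 : f z < f v := hmax z (hB'sub z hz) (Finset.mem_erase.mp hz).1
    have : f y + f z = f v + f v := by rw [← hf, ← hf, hyz]
    linarith
  have hnmva : v + a₁ ∉ B' + B' := by
    intro hmem
    obtain ⟨y, hy, z, hz, hyz⟩ := Finset.mem_add.mp hmem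
    have h1 : f y ≤ f a₁ := hfB' y hy
    have h2 : f z ≤ f a₁ := hfB' z hz
    have : f y + f z = f v + f a₁ := by rw [← hf, ← hf, hyz]
    linarith
  -- a third new sum exists, else B is collinear
  have hthird : ∃ x₀ ∈ B, x₀ ≠ v ∧ x₀ ≠ a₁ ∧ v + x₀ ∉ B' + B' := by
    by_contra hall
    push_neg at hall
    apply hnc
    have main : ∀ k : ℕ, ∀ x ∈ B, (B.filter fun u => f x < f u).card ≤ k →
        ∃ t : ℚ, x = v + t • (a₁ - v) := by
      intro k
      induction k using Nat.strong_induction_on with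
      | _ k ih =>
        intro x hx hk
        by_cases hxv : x = v
        · exact ⟨0, by simp [hxv]⟩
        by_cases hxa : x = a₁
        · exact ⟨1, by simp [hxa]⟩
        have hmem := hall x hx hxv hxa
        obtain ⟨y, hy, z, hz, hyz⟩ := Finset.mem_add.mp hmem
        have hfy : f y ≤ f a₁ := hfB' y hy
        have hfz : f z ≤ f a₁ := hfB' z hz
        have hsum : f y + f z = f v + f x := by rw [← hf, ← hf, hyz]
        have hfxv : f x < f v := hmax x hx hxv
        have hxy : f x < f y := by linarith
        have hxz : f x < f z := by linarith
        have hrank : ∀ u ∈ B, f x < f u →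
            (B.filter fun w => f u < f w).card < (B.filter fun w => f x < f w).card := by
          intro u huB hu
          apply Finset.card_lt_card
          rw [Finset.ssubset_iff_of_subset]
          · exact ⟨u, Finset.mem_filter.mpr ⟨huB, hu⟩, by simp⟩
          · intro w hw
            rw [Finset.mem_filter] at hw ⊢
            exact ⟨hw.1, lt_trans hu hw.2⟩
        have hyB := hB'sub y hy
        have hzB := hB'sub z hz
        obtain ⟨ty, hty⟩ := ih _ (lt_of_lt_of_le (hrank y hyB hxy) hk) y hyB le_rfl
        obtain ⟨tz, htz⟩ := ih _ (lt_of_lt_of_le (hrank z hzB hxz) hk) z hzB le_rfl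
        refine ⟨ty + tz, ?_⟩
        have hxeq : x = y + z - v := by rw [hyz]; abel
        rw [hxeq, hty, htz, add_smul]
        abel
    exact ⟨v, a₁ - v, fun x hx => main _ x hx le_rfl⟩
  obtain ⟨x₀, hx₀B, hx₀v, hx₀a, hnmvx⟩ := hthird
  -- count
  have hsubsum : B' + B' ⊆ B + B :=
    Finset.add_subset_add (Finset.erase_subset _ _) (Finset.erase_subset _ _)
  have hS : insert (v + v) (insert (v + a₁) (insert (v + x₀) (B' + B'))) ⊆ B + B := by
    intro z hz
    simp only [Finset.mem_insert] at hz
    rcases hz with rfl | rfl | rfl | hz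
    · exact Finset.add_mem_add hv hv
    · exact Finset.add_mem_add hv ha₁B
    · exact Finset.add_mem_add hv hx₀B
    · exact hsubsum hz
  have hcard : (insert (v + v) (insert (v + a₁) (insert (v + x₀) (B' + B')))).card
      = (B' + B').card + 3 := by
    have h1 : v + a₁ ∉ insert (v + x₀) (B' + B') := by
      simp only [Finset.mem_insert]
      push_neg
      exact ⟨fun hc => hx₀a (add_left_cancel hc).symm, hnmva⟩
    have h2 : v + v ∉ insert (v + a₁) (insert (v + x₀) (B' + B')) := by
      simp only [Finset.mem_insert]
      push_neg
      refine ⟨fun hc => ha₁v (add_left_cancel hc).symm,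
        fun hc => hx₀v (add_left_cancel hc).symm, hnm2v⟩
    rw [Finset.card_insert_of_notMem h2, Finset.card_insert_of_notMem h1,
      Finset.card_insert_of_notMem hnmvx]
  calc (B' + B').card + 3 = _ := hcard.symm
    _ ≤ (B + B).card := Finset.card_le_card hS
end step

lemma neg_add_neg_finset (s t : Finset V) : (-s) + (-t) = -(s + t) := by
  ext z
  simp only [Finset.mem_neg, Finset.mem_add]
  constructor
  · rintro ⟨y, ⟨a, ha, rfl⟩, w, ⟨b, hb, rfl⟩, rfl⟩
    exact ⟨a + b, ⟨a, ha, b, hb, rfl⟩, by abel⟩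
  · rintro ⟨u, ⟨a, ha, b, hb, rfl⟩, rfl⟩
    exact ⟨-a, ⟨a, ha, rfl⟩, -b, ⟨b, hb, rfl⟩, by abel⟩

lemma erase_neg (B : Finset V) (w : V) : (-B).erase (-w) = -(B.erase w) := by
  ext z
  simp only [Finset.mem_erase, Finset.mem_neg, Finset.mem_erase]
  constructor
  · rintro ⟨hz, a, ha, rfl⟩
    exact ⟨a, ⟨fun he => hz (by rw [he]), ha⟩, rfl⟩
  · rintro ⟨a, ⟨haw, ha⟩, rfl⟩
    exact ⟨fun he => haw (neg_injective he), a, ha, rfl⟩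

lemma coll_neg' {s : Finset V} (h : Coll s) : Coll (-s) := by
  obtain ⟨p, d, hp⟩ := h
  refine ⟨-p, -d, fun x hx => ?_⟩
  rw [Finset.mem_neg] at hx
  obtain ⟨y, hy, rfl⟩ := hx
  obtain ⟨t, ht⟩ := hp y hy
  refine ⟨t, ?_⟩
  rw [ht, smul_neg]
  abel

lemma core (n : ℕ) : ∀ B : Finset V, ∀ f : V → ℚ, (∀ x y, f (x + y) = f x + f y) →
    Set.InjOn f ↑(B + B) → B.card = n → 2 ≤ n → (n = 2 ∨ ¬ Coll B) →
    3 * n - 3 ≤ (B + B).card := by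
  induction n using Nat.strong_induction_on with
  | _ n ih =>
    intro B f hf hinj hcard h2 hcoll
    have hBinj : Set.InjOn f ↑B := f_injOn_of_injOn_add hf hinj
    rcases eq_or_lt_of_le h2 with h2' | h3
    · -- base case n = 2
      have hc2 : B.card = 2 := by omega
      obtain ⟨x, y, hxy, rfl⟩ := Finset.card_eq_two.mp hc2
      have hxB : x ∈ ({x, y} : Finset V) := by simp
      have hyB : y ∈ ({x, y} : Finset V) := by simp
      have hd1 : x + x ≠ x + y := fun hc => hxy (add_left_cancel hc)
      have hd2 : x + y ≠ y + y := fun hc => hxy (add_right_cancel hc)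
      have hd3 : x + x ≠ y + y := by
        intro hc
        apply hxy
        have h2x : (2 : ℚ) • x = (2 : ℚ) • y := by
          rw [two_smul, two_smul]; exact hc
        exact smul_right_injective V two_ne_zero h2x
      have hsub : ({x + x, x + y, y + y} : Finset V) ⊆ {x, y} + {x, y} := by
        intro z hz
        simp only [Finset.mem_insert, Finset.mem_singleton] at hz
        rcases hz with rfl | rfl | rfl
        · exact Finset.add_mem_add hxB hxB
        · exact Finset.add_mem_add hxB hyB
        · exact Finset.add_mem_add hyB hyB
      have hc3 : ({x + x, x + y, y + y} : Finset V).card = 3 := by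
        rw [Finset.card_insert_of_notMem (by simp [hd1, hd3]),
          Finset.card_insert_of_notMem (by simp [hd2]), Finset.card_singleton]
      have := Finset.card_le_card hsub
      omega
    · -- step n ≥ 3
      have hnc : ¬ Coll B := hcoll.resolve_left (by omega)
      have hBne : B.Nonempty := Finset.card_pos.mp (by omega)
      obtain ⟨v, hvB, hvmax⟩ := Finset.exists_max_image B f hBne
      obtain ⟨w, hwB, hwmin⟩ := Finset.exists_min_image B f hBne
      have hvw : v ≠ w := by
        intro he
        obtain ⟨x, hx, y, hy, hxy⟩ := Finset.one_lt_card.mp (show 1 < B.card by omega)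
        apply hxy
        have hfeq : ∀ z ∈ B, f z = f v := by
          intro z hz
          have h1 := hvmax z hz
          have h2 := hwmin z hz
          rw [← he] at h2
          linarith
        exact hBinj hx hy (by rw [hfeq x hx, hfeq y hy])
      have hmaxs : ∀ x ∈ B, x ≠ v → f x < f v := fun x hx hne =>
        lt_of_le_of_ne (hvmax x hx) (fun he => hne (hBinj hx hvB he))
      have hmins : ∀ x ∈ B, x ≠ w → f w < f x := fun x hx hne =>
        lt_of_le_of_ne (hwmin x hx) (fun he => hne (hBinj hx hwB he.symm))
      have hside : ((B.erase v).card = 2 ∨ ¬ Coll (B.erase v)) ∨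
          ((B.erase w).card = 2 ∨ ¬ Coll (B.erase w)) := by
        rcases eq_or_lt_of_le (show 3 ≤ n from h3) with h3' | h4
        · left; left
          rw [Finset.card_erase_of_mem hvB]; omega
        · rcases not_coll_erase hvB hwB hvw (by omega) hnc with hc | hc
          · exact Or.inl (Or.inr hc)
          · exact Or.inr (Or.inr hc)
      rcases hside with hOK | hOK
      · -- remove the maximum
        have hstep := step hf hinj hvB hmaxs hnc (by omega)
        have hsub : ↑(B.erase v + B.erase v) ⊆ (↑(B + B) : Set V) := by
          intro z hz
          exact Finset.mem_coe.mpr ((Finset.add_subset_add (Finset.erase_subset _ _)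
            (Finset.erase_subset _ _)) (Finset.mem_coe.mp hz))
        have hcard' : (B.erase v).card = n - 1 := by
          rw [Finset.card_erase_of_mem hvB, hcard]
        have hIH := ih (n - 1) (by omega) (B.erase v) f hf (hinj.mono hsub) hcard'
          (by omega) (by
            rcases hOK with h | h
            · exact Or.inl (by omega)
            · exact Or.inr h)
        omega
      · -- remove the minimum, by passing to -B
        have hinjneg : Set.InjOn f ↑((-B) + (-B)) := by
          rw [neg_add_neg_finset]
          intro a ha b hb hab
          rw [Finset.coe_neg, Set.mem_neg] at ha hb
          have : -a = -b := hinj ha hb (by rw [f_neg hf, f_neg hf, hab])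
          exact neg_injective this
        have hwneg : -w ∈ -B := by
          rw [Finset.mem_neg]; exact ⟨w, hwB, rfl⟩
        have hnegmax : ∀ x ∈ -B, x ≠ -w → f x < f (-w) := by
          intro x hx hne
          rw [Finset.mem_neg] at hx
          obtain ⟨u, hu, rfl⟩ := hx
          rw [f_neg hf, f_neg hf]
          have : u ≠ w := fun he => hne (by rw [he])
          linarith [hmins u hu this]
        have hncneg : ¬ Coll (-B) := by
          intro hc
          have := coll_neg' hc
          rw [neg_neg] at this
          exact hnc this
        have hstep := step hf hinjneg hwneg hnegmax hncneg
          (by rw [Finset.card_neg]; omega)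
        rw [erase_neg, neg_add_neg_finset, neg_add_neg_finset, Finset.card_neg,
          Finset.card_neg] at hstep
        have hsub : ↑(B.erase w + B.erase w) ⊆ (↑(B + B) : Set V) := by
          intro z hz
          exact Finset.mem_coe.mpr ((Finset.add_subset_add (Finset.erase_subset _ _)
            (Finset.erase_subset _ _)) (Finset.mem_coe.mp hz))
        have hcard' : (B.erase w).card = n - 1 := by
          rw [Finset.card_erase_of_mem hwB, hcard]
        have hIH := ih (n - 1) (by omega) (B.erase w) f hf (hinj.mono hsub) hcard'
          (by omega) (by
            rcases hOK with h | h
            · exact Or.inl (by omega)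
            · exact Or.inr h)
        omega

lemma exists_eval_injOn (W : Finset V) :
    ∃ t : ℚ, Set.InjOn (fun p : V => Polynomial.eval t p) ↑W := by
  classical
  set P : Finset V := ((W ×ˢ W).filter fun pq => pq.1 ≠ pq.2).image fun pq => pq.1 - pq.2
    with hP
  obtain ⟨t, ht⟩ := Infinite.exists_notMem_finset (P.biUnion fun p => p.roots.toFinset)
  refine ⟨t, fun p hp q hq hpq => ?_⟩
  by_contra hne
  have hm : p - q ∈ P := by
    rw [hP, Finset.mem_image]
    exact ⟨(p, q), Finset.mem_filter.mpr
      ⟨Finset.mem_product.mpr ⟨Finset.mem_coe.mp hp, Finset.mem_coe.mp hq⟩, hne⟩, rfl⟩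
  apply ht
  apply Finset.mem_biUnion.mpr
  refine ⟨p - q, hm, Multiset.mem_toFinset.mpr ?_⟩
  rw [Polynomial.mem_roots (sub_ne_zero.mpr hne)]
  simp only [Polynomial.IsRoot, Polynomial.eval_sub]
  simpa [sub_eq_zero] using hpq

lemma gen_bound {B : Finset V} (hnc : ¬ Coll B) : 3 * B.card - 3 ≤ (B + B).card := by
  obtain ⟨t, ht⟩ := exists_eval_injOn (B + B)
  have h3 : 3 ≤ B.card := by
    by_contra hc
    exact hnc (coll_of_card_le_two (by omega))
  exact core B.card B (fun p => Polynomial.eval t p)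
    (fun x y => by simp [Polynomial.eval_add]) ht rfl (by omega) (Or.inr hnc)

/-! ### Bridge from naturals to exponent polynomials -/

def phi (a : ℕ) : V :=
  ∑ p ∈ a.factorization.support, Polynomial.monomial p ((a.factorization p : ℚ))

lemma phi_coeff (a : ℕ) (q : ℕ) : (phi a).coeff q = (a.factorization q : ℚ) := by
  rw [phi, Polynomial.finset_sum_coeff]
  simp only [Polynomial.coeff_monomial]
  rw [Finset.sum_ite_eq' a.factorization.support q (fun p => ((a.factorization p : ℚ)))]
  split_ifs with h
  · rfl
  · rw [Finsupp.notMem_support_iff.mp h, Nat.cast_zero]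

lemma phi_add {a b : ℕ} (ha : a ≠ 0) (hb : b ≠ 0) : phi (a * b) = phi a + phi b := by
  apply Polynomial.ext
  intro q
  rw [Polynomial.coeff_add, phi_coeff, phi_coeff, phi_coeff, Nat.factorization_mul ha hb,
    Finsupp.add_apply, Nat.cast_add]

lemma phi_inj {a b : ℕ} (ha : a ≠ 0) (hb : b ≠ 0) (h : phi a = phi b) : a = b := by
  apply Nat.factorization_inj ha hb
  apply Finsupp.ext
  intro q
  have := congrArg (fun p => Polynomial.coeff p q) h
  simp only [phi_coeff] at this
  exact_mod_cast this

lemma prod_zpow' (s : Finset ℕ) (f : ℕ → ℚ) (n : ℤ) :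
    (∏ i ∈ s, f i) ^ n = ∏ i ∈ s, f i ^ n := by
  induction s using Finset.cons_induction with
  | empty => simp
  | cons a s ha ih => rw [Finset.prod_cons, Finset.prod_cons, mul_zpow, ih]

/-- From collinearity of exponent vectors: geometric progression structure. -/
lemma gp_of_coll {A : Finset ℕ} (hpos : ∀ a ∈ A, 0 < a) (hcoll : Coll (A.image phi))
    {a0 a1 : ℕ} (ha0 : a0 ∈ A) (ha1 : a1 ∈ A) (hne : a1 ≠ a0) :
    ∃ R : ℚ, 0 < R ∧ R ≠ 1 ∧ ∃ m : ℕ → ℤ, ∀ x ∈ A, (x : ℚ) = (a0 : ℚ) * R ^ (m x) := by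
  classical
  obtain ⟨p, d, hl⟩ := hcoll
  have ha0n : a0 ≠ 0 := (hpos a0 ha0).ne'
  have ha1n : a1 ≠ 0 := (hpos a1 ha1).ne'
  set e : ℕ → ℕ → ℤ := fun x r => (x.factorization r : ℤ) - (a0.factorization r : ℤ) with he
  -- the diff vectors are parallel: determinant identities
  obtain ⟨t0, ht0⟩ := hl (phi a0) (Finset.mem_image_of_mem phi ha0)
  have hcoe : ∀ x ∈ A, ∀ r : ℕ, ∃ c : ℚ, (∀ s : ℕ, ((e x s : ℚ)) = c * d.coeff s) := by
    intro x hx r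
    obtain ⟨tx, htx⟩ := hl (phi x) (Finset.mem_image_of_mem phi hx)
    refine ⟨tx - t0, fun s => ?_⟩
    have hsub : phi x - phi a0 = (tx - t0) • d := by
      rw [htx, ht0, sub_smul]; abel
    have := congrArg (fun z => Polynomial.coeff z s) hsub
    simp only [Polynomial.coeff_sub, Polynomial.coeff_smul, smul_eq_mul] at this
    rw [phi_coeff, phi_coeff] at this
    rw [he]
    push_cast
    exact this
  have hdet : ∀ x ∈ A, ∀ y ∈ A, ∀ r s : ℕ, e x r * e y s = e y r * e x s := by
    intro x hx y hy r s
    obtain ⟨cx, hcx⟩ := hcoe x hx r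
    obtain ⟨cy, hcy⟩ := hcoe y hy r
    have : ((e x r * e y s : ℤ) : ℚ) = ((e y r * e x s : ℤ) : ℚ) := by
      push_cast
      rw [hcx, hcx, hcy, hcy]
      ring
    exact_mod_cast this
  -- a coordinate where a1 differs from a0
  have hq0 : ∃ q0 : ℕ, e a1 q0 ≠ 0 := by
    by_contra hc
    push_neg at hc
    apply hne
    apply Nat.factorization_inj ha1n ha0n
    apply Finsupp.ext
    intro q
    have := hc q
    simp only [he, sub_eq_zero] at this
    exact_mod_cast this
  obtain ⟨q0, hq0⟩ := hq0
  set S : Finset ℕ := a1.factorization.support ∪ a0.factorization.support with hS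
  have heS : ∀ r, r ∉ S → e a1 r = 0 := by
    intro r hr
    rw [hS, Finset.mem_union] at hr
    push_neg at hr
    simp only [he, Finsupp.notMem_support_iff.mp hr.1, Finsupp.notMem_support_iff.mp hr.2]
    simp
  have hq0S : q0 ∈ S := by
    by_contra hc
    exact hq0 (heS q0 hc)
  set g : ℤ := S.gcd (e a1) with hg
  have hgne : g ≠ 0 := by
    rw [hg]
    intro hc
    exact hq0 (Finset.gcd_eq_zero_iff.mp hc q0 hq0S)
  set w : ℕ → ℤ := fun r => e a1 r / g with hw
  have hwg : ∀ r, w r * g = e a1 r := by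
    intro r
    by_cases hr : r ∈ S
    · exact Int.ediv_mul_cancel (Finset.gcd_dvd hr)
    · simp only [hw, heS r hr]
      simp
  set δ : ℤ := e a1 q0 with hδ
  set m : ℕ → ℤ := fun x => e x q0 * g / δ with hm
  have hmδ : ∀ x ∈ A, m x * δ = e x q0 * g := by
    intro x hx
    apply Int.ediv_mul_cancel
    have hdvdall : ∀ r ∈ S, δ ∣ e x q0 * e a1 r := by
      intro r hr
      exact ⟨e x r, hdet x hx a1 ha1 q0 r⟩
    have h1 : δ ∣ S.gcd (fun r => e x q0 * e a1 r) := Finset.dvd_gcd hdvdall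
    rw [Finset.gcd_mul_left] at h1
    rcases abs_choice (e x q0) with habs | habs
    · rwa [← Int.abs_eq_normalize, habs, ← hg] at h1
    · rw [← Int.abs_eq_normalize, habs, ← hg, neg_mul] at h1
      exact (dvd_neg.mp h1)
  have hkey : ∀ x ∈ A, ∀ r, e x r = m x * w r := by
    intro x hx r
    have hcancel : e x r * (δ * g) = m x * w r * (δ * g) := by
      have h1 : δ * e x r = e x q0 * e a1 r := (hdet x hx a1 ha1 q0 r).symm
      calc e x r * (δ * g) = (δ * e x r) * g := by ring
        _ = (e x q0 * e a1 r) * g := by rw [h1]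
        _ = (e x q0 * g) * e a1 r := by ring
        _ = (m x * δ) * (w r * g) := by rw [hmδ x hx, hwg]
        _ = m x * w r * (δ * g) := by ring
    exact mul_right_cancel₀ (mul_ne_zero (hδ ▸ hq0) hgne) hcancel
  -- primes
  have hSprime : ∀ r ∈ S, Nat.Prime r := by
    intro r hr
    rw [hS, Finset.mem_union, Nat.support_factorization, Nat.support_factorization] at hr
    rcases hr with hr | hr
    · exact Nat.prime_of_mem_primeFactors hr
    · exact Nat.prime_of_mem_primeFactors hr
  set R : ℚ := ∏ r ∈ S, (r : ℚ) ^ (w r) with hR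
  have hR0 : 0 < R := by
    rw [hR]
    apply Finset.prod_pos
    intro r hr
    exact zpow_pos (by exact_mod_cast (hSprime r hr).pos) _
  -- main formula
  have hkey2 : ∀ x ∈ A, (x : ℚ) = (a0 : ℚ) * R ^ (m x) := by
    intro x hx
    have hxn : x ≠ 0 := (hpos x hx).ne'
    set T : Finset ℕ := S ∪ x.factorization.support ∪ a0.factorization.support with hT
    have hTprime : ∀ r ∈ T, Nat.Prime r := by
      intro r hr
      rw [hT, Finset.mem_union, Finset.mem_union, Nat.support_factorization,
        Nat.support_factorization] at hr
      rcases hr with (hr | hr) | hr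
      · exact hSprime r hr
      · exact Nat.prime_of_mem_primeFactors hr
      · exact Nat.prime_of_mem_primeFactors hr
    have hTne : ∀ r ∈ T, ((r : ℚ)) ≠ 0 := fun r hr => by
      exact_mod_cast (hTprime r hr).pos.ne'
    have hprodx : (x : ℚ) = ∏ r ∈ T, (r : ℚ) ^ ((x.factorization r : ℤ)) := by
      conv_lhs => rw [← Nat.factorization_prod_pow_eq_self hxn]
      rw [Finsupp.prod]
      push_cast
      have hsubx : x.factorization.support ⊆ T := by
        rw [hT]; intro r hr; simp only [Finset.mem_union]; tauto
      rw [Finset.prod_subset hsubx]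
      · apply Finset.prod_congr rfl
        intro r hr
        rw [zpow_natCast]
      · intro r _ hr
        rw [Finsupp.notMem_support_iff.mp hr]
        simp
    have hproda : (a0 : ℚ) = ∏ r ∈ T, (r : ℚ) ^ ((a0.factorization r : ℤ)) := by
      conv_lhs => rw [← Nat.factorization_prod_pow_eq_self ha0n]
      rw [Finsupp.prod]
      push_cast
      have hsuba : a0.factorization.support ⊆ T := by
        rw [hT]; intro r hr; simp only [Finset.mem_union]; tauto
      rw [Finset.prod_subset hsuba]
      · apply Finset.prod_congr rfl
        intro r hr
        rw [zpow_natCast]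
      · intro r _ hr
        rw [Finsupp.notMem_support_iff.mp hr]
        simp
    have hRm : R ^ (m x) = ∏ r ∈ T, (r : ℚ) ^ (e x r) := by
      rw [hR, prod_zpow']
      have hsubS : S ⊆ T := by
        rw [hT]; intro r hr; simp only [Finset.mem_union]; tauto
      rw [Finset.prod_subset hsubS]
      · apply Finset.prod_congr rfl
        intro r hr
        rw [← zpow_mul, hkey x hx r, mul_comm (m x) (w r)]
      · intro r hrT hrS
        have hw0 : w r = 0 := by simp only [hw]; rw [heS r hrS]; simp
        rw [hw0]
        simp
    rw [hprodx, hproda, hRm, ← Finset.prod_mul_distrib]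
    apply Finset.prod_congr rfl
    intro r hr
    rw [← zpow_add₀ (hTne r hr)]
    congr 1
    rw [he]
    ring
  refine ⟨R, hR0, ?_, m, hkey2⟩
  intro hR1
  apply hne
  have h1 := hkey2 a1 ha1
  rw [hR1, one_zpow, mul_one] at h1
  exact_mod_cast h1

/-! ### powers of a rational: R^i + R^j = R^k + R^l forces {i,j} = {k,l} -/

lemma pow_strictMono_q {R : ℚ} (hR : 1 < R) : StrictMono (fun n : ℕ => R ^ n) := by
  intro a b hab
  exact pow_lt_pow_right₀ hR hab

lemma rr_zero {R : ℚ} (hR : 1 < R) {j k l : ℕ} (heq : 1 + R ^ j = R ^ k + R ^ l) :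
    (k = 0 ∧ j = l) ∨ (l = 0 ∧ j = k) := by
  have hinj := (pow_strictMono_q hR).injective
  rcases Nat.eq_zero_or_pos k with rfl | hk
  · left
    refine ⟨rfl, hinj ?_⟩
    simp only [pow_zero] at heq ⊢
    linarith
  rcases Nat.eq_zero_or_pos l with rfl | hl
  · right
    refine ⟨rfl, hinj ?_⟩
    simp only [pow_zero] at heq ⊢
    linarith
  exfalso
  have hRk : 1 < R ^ k := one_lt_pow₀ hR hk.ne'
  have hRl : 1 < R ^ l := one_lt_pow₀ hR hl.ne'
  rcases Nat.eq_zero_or_pos j with rfl | hj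
  · simp only [pow_zero] at heq
    linarith
  -- divisibility argument
  have hnum : 0 < R.num := Rat.num_pos.mpr (by linarith)
  set p : ℕ := R.num.natAbs with hp
  set q : ℕ := R.den with hq
  have hpz : ((p : ℤ)) = R.num := Int.natAbs_of_nonneg hnum.le
  have hq0 : 0 < q := R.pos
  have hRpq : R = (p : ℚ) / (q : ℚ) := by
    rw [← Rat.num_div_den R, ← hpz]
    push_cast
    rfl
  have hcop : Nat.Coprime p q := R.reduced
  have hqp : q < p := by
    have h1 : (q : ℚ) < (p : ℚ) := by
      have hq0' : (0 : ℚ) < (q : ℚ) := by exact_mod_cast hq0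
      rw [hRpq] at hR
      rw [lt_div_iff₀ hq0'] at hR
      linarith
    exact_mod_cast h1
  set J : ℕ := max j (max k l) with hJ
  have hterm : ∀ e : ℕ, e ≤ J → (p : ℚ) ^ e * (q : ℚ) ^ (J - e) = R ^ e * (q : ℚ) ^ J := by
    intro e he
    have hq0' : (q : ℚ) ≠ 0 := by positivity
    rw [hRpq, div_pow]
    rw [div_mul_eq_mul_div, eq_div_iff (by positivity)]
    rw [mul_assoc, ← pow_add]
    congr 2
    omega
  have hQ : (q : ℚ) ^ J + (p : ℚ) ^ j * (q : ℚ) ^ (J - j)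
      = (p : ℚ) ^ k * (q : ℚ) ^ (J - k) + (p : ℚ) ^ l * (q : ℚ) ^ (J - l) := by
    rw [hterm j (by omega), hterm k (by omega), hterm l (by omega)]
    linear_combination ((q : ℚ) ^ J) * heq
  have hNE : q ^ J + p ^ j * q ^ (J - j) = p ^ k * q ^ (J - k) + p ^ l * q ^ (J - l) := by
    exact_mod_cast hQ
  have hdj : p ∣ p ^ j * q ^ (J - j) := dvd_mul_of_dvd_left (dvd_pow_self p hj.ne') _
  have hdk : p ∣ p ^ k * q ^ (J - k) := dvd_mul_of_dvd_left (dvd_pow_self p hk.ne') _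
  have hdl : p ∣ p ^ l * q ^ (J - l) := dvd_mul_of_dvd_left (dvd_pow_self p hl.ne') _
  have hsum : p ∣ q ^ J + p ^ j * q ^ (J - j) := by
    rw [hNE]
    exact dvd_add hdk hdl
  have hdvd : p ∣ q ^ J := (Nat.dvd_add_right hdj).mp (by rwa [Nat.add_comm] at hsum)
  have : p = 1 := (hcop.pow_right J).eq_one_of_dvd hdvd
  omega

lemma rr_nat {R : ℚ} (hR : 1 < R) {i j k l : ℕ} (heq : R ^ i + R ^ j = R ^ k + R ^ l)
    (h0 : i = 0 ∨ j = 0 ∨ k = 0 ∨ l = 0) : (i = k ∧ j = l) ∨ (i = l ∧ j = k) := by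
  rcases h0 with rfl | rfl | rfl | rfl
  · rw [pow_zero] at heq
    rcases rr_zero hR heq with ⟨h1, h2⟩ | ⟨h1, h2⟩
    · exact Or.inl ⟨h1.symm, h2⟩
    · exact Or.inr ⟨h1.symm, h2⟩
  · rw [pow_zero, add_comm (R ^ i)] at heq
    rcases rr_zero hR heq with ⟨h1, h2⟩ | ⟨h1, h2⟩
    · exact Or.inr ⟨h2, h1.symm⟩
    · exact Or.inl ⟨h2, h1.symm⟩
  · rw [pow_zero] at heq
    rcases rr_zero hR heq.symm with ⟨h1, h2⟩ | ⟨h1, h2⟩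
    · exact Or.inl ⟨h1, h2.symm⟩
    · exact Or.inr ⟨h2.symm, h1⟩
  · rw [pow_zero, add_comm (R ^ k)] at heq
    rcases rr_zero hR heq.symm with ⟨h1, h2⟩ | ⟨h1, h2⟩
    · exact Or.inr ⟨h1, h2.symm⟩
    · exact Or.inl ⟨h2.symm, h1⟩

lemma rr_int_main {R : ℚ} (hR : 1 < R) {i j k l : ℤ} (heq : R ^ i + R ^ j = R ^ k + R ^ l) :
    (i = k ∧ j = l) ∨ (i = l ∧ j = k) := by
  have hRne : R ≠ 0 := by linarith
  set M : ℤ := min (min i j) (min k l) with hM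
  have hshift : R ^ (i + -M) + R ^ (j + -M) = R ^ (k + -M) + R ^ (l + -M) := by
    have h1 : (R ^ i + R ^ j) * R ^ (-M) = (R ^ k + R ^ l) * R ^ (-M) := by rw [heq]
    rwa [add_mul, add_mul, ← zpow_add₀ hRne, ← zpow_add₀ hRne, ← zpow_add₀ hRne,
      ← zpow_add₀ hRne] at h1
  have hi : i + -M = ((i - M).toNat : ℤ) := by omega
  have hj : j + -M = ((j - M).toNat : ℤ) := by omega
  have hk : k + -M = ((k - M).toNat : ℤ) := by omega
  have hl : l + -M = ((l - M).toNat : ℤ) := by omega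
  rw [hi, hj, hk, hl, zpow_natCast, zpow_natCast, zpow_natCast, zpow_natCast] at hshift
  have h0 : (i - M).toNat = 0 ∨ (j - M).toNat = 0 ∨ (k - M).toNat = 0 ∨ (l - M).toNat = 0 := by
    omega
  rcases rr_nat hR hshift h0 with ⟨h1, h2⟩ | ⟨h1, h2⟩
  · left; omega
  · right; omega

lemma rr_int {R : ℚ} (hR0 : 0 < R) (hR1 : R ≠ 1) {i j k l : ℤ}
    (heq : R ^ i + R ^ j = R ^ k + R ^ l) :
    (i = k ∧ j = l) ∨ (i = l ∧ j = k) := by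
  rcases lt_trichotomy R 1 with hlt | he | hgt
  · have hinv : 1 < R⁻¹ := (one_lt_inv₀ hR0).mpr hlt
    have heq' : R⁻¹ ^ (-i) + R⁻¹ ^ (-j) = R⁻¹ ^ (-k) + R⁻¹ ^ (-l) := by
      rw [inv_zpow, inv_zpow, inv_zpow, inv_zpow, ← zpow_neg, ← zpow_neg, ← zpow_neg,
        ← zpow_neg, neg_neg, neg_neg, neg_neg, neg_neg]
      exact heq
    rcases rr_int_main hinv heq' with ⟨h1, h2⟩ | ⟨h1, h2⟩
    · left; omega
    · right; omega
  · exact absurd he hR1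
  · exact rr_int_main hgt heq

lemma sidon_of_coll {A : Finset ℕ} (hpos : ∀ a ∈ A, 0 < a) (hcoll : Coll (A.image phi)) :
    ∀ a ∈ A, ∀ b ∈ A, ∀ c ∈ A, ∀ d ∈ A, a + b = c + d →
      (a = c ∧ b = d) ∨ (a = d ∧ b = c) := by
  intro a ha b hb c hc d hd habcd
  by_cases htriv : ∀ x ∈ A, x = a
  · have hb' := htriv b hb
    have hc' := htriv c hc
    have hd' := htriv d hd
    left
    omega
  · push_neg at htriv
    obtain ⟨x1, hx1, hx1ne⟩ := htriv
    obtain ⟨R, hR0, hR1, m, hmx⟩ := gp_of_coll hpos hcoll ha hx1 hx1ne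
    have ha0 : ((a : ℚ)) ≠ 0 := by
      exact_mod_cast (hpos a ha).ne'
    have hQ : (a : ℚ) * R ^ (m a) + (a : ℚ) * R ^ (m b)
        = (a : ℚ) * R ^ (m c) + (a : ℚ) * R ^ (m d) := by
      rw [← hmx a ha, ← hmx b hb, ← hmx c hc, ← hmx d hd]
      exact_mod_cast congrArg (fun t : ℕ => (t : ℚ)) habcd
    have hQ' : R ^ (m a) + R ^ (m b) = R ^ (m c) + R ^ (m d) := by
      apply mul_left_cancel₀ ha0
      rw [mul_add, mul_add]
      exact hQ
    have hval : ∀ x ∈ A, ∀ y ∈ A, m x = m y → x = y := by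
      intro x hx y hy hxy
      have : (x : ℚ) = (y : ℚ) := by rw [hmx x hx, hmx y hy, hxy]
      exact_mod_cast this
    rcases rr_int hR0 hR1 hQ' with ⟨h1, h2⟩ | ⟨h1, h2⟩
    · exact Or.inl ⟨hval a ha c hc h1, hval b hb d hd h2⟩
    · exact Or.inr ⟨hval a ha d hd h1, hval b hb c hc h2⟩

lemma card_add_of_sidon {A : Finset ℕ}
    (hs : ∀ a ∈ A, ∀ b ∈ A, ∀ c ∈ A, ∀ d ∈ A, a + b = c + d →
      (a = c ∧ b = d) ∨ (a = d ∧ b = c)) :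
    (A + A).card = A.card * (A.card + 1) / 2 := by
  classical
  set f : Sym2 ℕ → ℕ := Sym2.lift ⟨fun a b => a + b, fun a b => add_comm a b⟩ with hf
  have himg : A + A = A.sym2.image f := by
    ext z
    simp only [Finset.mem_add, Finset.mem_image]
    constructor
    · rintro ⟨x, hx, y, hy, rfl⟩
      exact ⟨s(x, y), Finset.mk_mem_sym2_iff.mpr ⟨hx, hy⟩, rfl⟩
    · rintro ⟨u, hu, hz⟩
      induction u with
      | _ x y =>
        rw [Finset.mk_mem_sym2_iff] at hu
        exact ⟨x, hu.1, y, hu.2, hz⟩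
  have hinj : Set.InjOn f ↑A.sym2 := by
    intro u hu v hv huv
    induction u with
    | _ x y =>
      induction v with
      | _ x' y' =>
        rw [Finset.mem_coe, Finset.mk_mem_sym2_iff] at hu hv
        simp only [hf, Sym2.lift_mk] at huv
        rw [Sym2.eq_iff]
        exact hs x hu.1 y hu.2 x' hv.1 y' hv.2 huv
  rw [himg, Finset.card_image_of_injOn hinj, Finset.card_sym2, Nat.choose_two_right]
  simp only [Nat.add_sub_cancel]
  rw [Nat.mul_comm]

theorem stmt_10 (n : ℕ) (A : Finset ℕ) (hpos : ∀ a ∈ A, 0 < a) (hA : A.card = n)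
    (h : (A * A).card ≤ 3 * n - 4) :
    (A + A).card = n * (n + 1) / 2 := by
  classical
  subst hA
  have hphiinj : Set.InjOn phi ↑A := fun x hx y hy hxy =>
    phi_inj (hpos x (Finset.mem_coe.mp hx)).ne' (hpos y (Finset.mem_coe.mp hy)).ne' hxy
  set B : Finset V := A.image phi with hB
  have hBcard : B.card = A.card := Finset.card_image_of_injOn hphiinj
  have hBB : B + B = (A * A).image phi := by
    ext z
    simp only [hB, Finset.mem_add, Finset.mem_image, Finset.mem_mul]
    constructor
    · rintro ⟨u, ⟨x, hx, rfl⟩, v, ⟨y, hy, rfl⟩, rfl⟩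
      exact ⟨x * y, ⟨x, hx, y, hy, rfl⟩, phi_add (hpos x hx).ne' (hpos y hy).ne'⟩
    · rintro ⟨u, ⟨x, hx, y, hy, rfl⟩, rfl⟩
      exact ⟨phi x, ⟨x, hx, rfl⟩, phi y, ⟨y, hy, rfl⟩,
        (phi_add (hpos x hx).ne' (hpos y hy).ne').symm⟩
  have hAA : (A * A).card = (B + B).card := by
    rw [hBB]
    refine (Finset.card_image_of_injOn ?_).symm
    intro x hx y hy hxy
    rw [Finset.mem_coe, Finset.mem_mul] at hx hy
    obtain ⟨x1, hx1, x2, hx2, rfl⟩ := hx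
    obtain ⟨y1, hy1, y2, hy2, rfl⟩ := hy
    exact phi_inj (Nat.mul_ne_zero (hpos x1 hx1).ne' (hpos x2 hx2).ne')
      (Nat.mul_ne_zero (hpos y1 hy1).ne' (hpos y2 hy2).ne') hxy
  by_cases hcoll : Coll B
  · exact card_add_of_sidon (sidon_of_coll hpos hcoll)
  · exfalso
    have hgen := gen_bound hcoll
    have h3 : 3 ≤ B.card := by
      by_contra hc
      exact hcoll (coll_of_card_le_two (by omega))
    omega

end
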